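/- Let X be a set, F ⊆ X, S a set of subsets of X, B ∈ K_F(S), and R1, R2 ⊆ B. Then R1* ⊎ R2 = R1* ⊎_F R2. -/

import Mathlib

namespace SharingPaper

/-- `var(S) = ∪ {G | G ∈ S}`. -/
def varS {α : Type*} (S : Set (Set α)) : Set α := ⋃ G ∈ S, G

/-- Closure `S*`: the least superset of `S` closed under binary unions. -/
def closure {α : Type*} (S : Set (Set α)) : Set (Set α) :=
  ⋂₀ {S' | S ⊆ S' ∧ ∀ G1 ∈ S', ∀ G2 ∈ S', G1 ∪ G2 ∈ S'}

/-- Pairwise union `S1 ⊎ S2`. -/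
def pairUnion {α : Type*} (S1 S2 : Set (Set α)) : Set (Set α) :=
  {G | ∃ G1 ∈ S1, ∃ G2 ∈ S2, G = G1 ∪ G2}

/-- `S^{*F}`: the least superset `S'` of `S` such that `G1 ∪ G2 ∈ S'` whenever
`G1, G2 ∈ S'` and `G1 ∩ G2 ∩ F = ∅`. -/
def closureF {α : Type*} (Fv : Set α) (S : Set (Set α)) : Set (Set α) :=
  ⋂₀ {S' | S ⊆ S' ∧ ∀ G1 ∈ S', ∀ G2 ∈ S', G1 ∩ G2 ∩ Fv = ∅ → G1 ∪ G2 ∈ S'}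

/-- `S1 ⊎_F S2`. -/
def pairUnionF {α : Type*} (Fv : Set α) (S1 S2 : Set (Set α)) : Set (Set α) :=
  {G | ∃ G1 ∈ S1, ∃ G2 ∈ S2, (G1 ≠ G2 → G1 ∩ G2 ∩ Fv = ∅) ∧ G = G1 ∪ G2}

/-- The Filé decomposition `K_F(S)`. -/
def KF {α : Type*} (Fv : Set α) (S : Set (Set α)) : Set (Set (Set α)) :=
  {B | B ⊆ S ∧ Fv ⊆ varS B ∧
    ∀ G1 ∈ B, ∀ G2 ∈ B, G1 ≠ G2 → G1 ∩ G2 ∩ Fv = ∅}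

lemma subset_closure' {α : Type*} (S : Set (Set α)) : S ⊆ closure S := by
  intro G hG S' hS'
  exact hS'.1 hG

lemma closure_union' {α : Type*} {S : Set (Set α)} {G1 G2 : Set α}
    (h1 : G1 ∈ closure S) (h2 : G2 ∈ closure S) : G1 ∪ G2 ∈ closure S := by
  intro S' hS'
  exact hS'.2 G1 (h1 S' hS') G2 (h2 S' hS')

lemma sUnion_mem_closure' {α : Type*} {S : Set (Set α)} {C : Set (Set α)}
    (hfin : C.Finite) (hsub : C ⊆ S) (hne : C.Nonempty) : ⋃₀ C ∈ closure S := by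
  refine Set.Finite.induction_on
    (motive := fun s _ => s ⊆ S → s.Nonempty → ⋃₀ s ∈ closure S) C hfin
    (fun _ h => absurd h (by simp)) ?_ hsub hne
  intro a s _ hsf ih hsub _
  rcases s.eq_empty_or_nonempty with rfl | hsne
  · simpa using subset_closure' S (hsub (by simp))
  · rw [Set.sUnion_insert]
    exact closure_union' (subset_closure' S (hsub (by simp)))
      (ih (fun x hx => hsub (Set.mem_insert_of_mem _ hx)) hsne)

lemma closure_decomp {α : Type*} {S : Set (Set α)} {G : Set α} (hG : G ∈ closure S) :
    ∃ C : Set (Set α), C ⊆ S ∧ C.Finite ∧ C.Nonempty ∧ G = ⋃₀ C := by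
  have := hG {G | ∃ C : Set (Set α), C ⊆ S ∧ C.Finite ∧ C.Nonempty ∧ G = ⋃₀ C} ?_
  · exact this
  constructor
  · intro H hH
    exact ⟨{H}, by simpa using hH, Set.finite_singleton H, ⟨H, rfl⟩, by simp⟩
  · rintro G1 ⟨C1, hC1, hf1, hn1, rfl⟩ G2 ⟨C2, hC2, hf2, hn2, rfl⟩
    exact ⟨C1 ∪ C2, Set.union_subset hC1 hC2, hf1.union hf2,
      hn1.mono Set.subset_union_left, by simp [Set.sUnion_union]⟩

/-- if `B ∈ K_F(S)` and `R1, R2 ⊆ B` then `R1* ⊎ R2 = R1* ⊎_F R2`. -/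
theorem stmt12 {α : Type*} (Fv : Set α) (S : Set (Set α))
    (B : Set (Set α)) (hB : B ∈ KF Fv S)
    (R1 R2 : Set (Set α)) (hR1 : R1 ⊆ B) (hR2 : R2 ⊆ B) :
    pairUnion (closure R1) R2 = pairUnionF Fv (closure R1) R2 := by
  ext G
  constructor
  · rintro ⟨G1, h1, G2, h2, rfl⟩
    obtain ⟨C, hCsub, hCfin, hCne, rfl⟩ := closure_decomp h1
    have hdisj : ∀ H ∈ C, H ≠ G2 → H ∩ G2 ∩ Fv = ∅ := fun H hH hne =>
      hB.2.2 H (hR1 (hCsub hH)) G2 (hR2 h2) hne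
    by_cases hG2 : G2 ∈ C
    · rcases (C \ {G2}).eq_empty_or_nonempty with hemp | hne
      · have hCeq : C = {G2} := by
          apply Set.eq_singleton_iff_nonempty_unique_mem.mpr
          refine ⟨hCne, fun H hH => ?_⟩
          by_contra h
          have hmem : H ∈ C \ {G2} := ⟨hH, h⟩
          rw [hemp] at hmem
          exact hmem
        subst hCeq
        exact ⟨G2, subset_closure' R1 (hCsub (by simp)), G2, h2,
          fun h => absurd rfl h, by simp⟩
      · refine ⟨⋃₀ (C \ {G2}), sUnion_mem_closure' (hCfin.subset Set.diff_subset)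
          (fun x hx => hCsub hx.1) hne, G2, h2, fun _ => ?_, ?_⟩
        · ext x
          simp only [Set.mem_inter_iff, Set.mem_sUnion, Set.mem_empty_iff_false, iff_false]
          rintro ⟨⟨⟨H, hH, hxH⟩, hxG2⟩, hxF⟩
          have := hdisj H hH.1 hH.2
          exact absurd (by exact ⟨⟨hxH, hxG2⟩, hxF⟩ : x ∈ H ∩ G2 ∩ Fv) (by simp [this])
        · ext x
          simp only [Set.mem_union, Set.mem_sUnion]
          constructor
          · rintro (⟨H, hH, hxH⟩ | hx)
            · by_cases hHG2 : H = G2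
              · exact Or.inr (hHG2 ▸ hxH)
              · exact Or.inl ⟨H, ⟨hH, hHG2⟩, hxH⟩
            · exact Or.inr hx
          · rintro (⟨H, hH, hxH⟩ | hx)
            · exact Or.inl ⟨H, hH.1, hxH⟩
            · exact Or.inr hx
    · refine ⟨⋃₀ C, h1, G2, h2, fun _ => ?_, rfl⟩
      ext x
      simp only [Set.mem_inter_iff, Set.mem_sUnion, Set.mem_empty_iff_false, iff_false]
      rintro ⟨⟨⟨H, hH, hxH⟩, hxG2⟩, hxF⟩
      have hne : H ≠ G2 := fun h => hG2 (h ▸ hH)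
      exact absurd (by exact ⟨⟨hxH, hxG2⟩, hxF⟩ : x ∈ H ∩ G2 ∩ Fv) (by simp [hdisj H hH hne])
  · rintro ⟨G1, h1, G2, h2, _, rfl⟩
    exact ⟨G1, h1, G2, h2, rfl⟩

end SharingPaper
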